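/- Pentagon identity for elementary wall-crossing transformations (equation (pentagon) of the paper): for all γ, γ' ∈ ℤ² with ⟨γ',γ⟩ = 1, the automorphisms of K = ℂ(x,y) satisfy 𝒦_γ ∘ 𝒦_{γ'} = 𝒦_{γ'} ∘ 𝒦_{γ+γ'} ∘ 𝒦_γ. -/

import Mathlib

open MvPolynomial

set_option maxHeartbeats 1000000
set_option synthInstance.maxHeartbeats 400000

noncomputable section

/-- `K = ℂ(x,y)`, the field of rational functions in two variables over `ℂ`. -/
abbrev K : Type := FractionRing (MvPolynomial (Fin 2) ℂ)

/-- The rational function `x`. -/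
noncomputable def xx : K := algebraMap (MvPolynomial (Fin 2) ℂ) K (X 0)

/-- The rational function `y`. -/
noncomputable def yy : K := algebraMap (MvPolynomial (Fin 2) ℂ) K (X 1)

/-- `z^μ = x^m y^n` for `μ = (m,n) ∈ ℤ²`. -/
noncomputable def zmon (μ : ℤ × ℤ) : K := xx ^ μ.1 * yy ^ μ.2

/-- `⟨μ,γ⟩ = m b − n a` for `μ = (m,n)`, `γ = (a,b)`. -/
def pairing (μ γ : ℤ × ℤ) : ℤ := μ.1 * γ.2 - μ.2 * γ.1

/-- `Φ` is the wall-crossing transformation `𝒦_{γ,d}`: the `ℂ`-algebra automorphism of `K`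
satisfying `𝒦_{γ,d}(z^μ) = z^μ (1+z^γ)^{d⟨μ,γ⟩}` for all `μ ∈ ℤ²`. -/
def IsWallCrossing (d : ℤ) (γ : ℤ × ℤ) (Φ : K ≃ₐ[ℂ] K) : Prop :=
  ∀ μ : ℤ × ℤ, Φ (zmon μ) = zmon μ * (1 + zmon γ) ^ (d * pairing μ γ)

lemma algebraMap_inj :
    Function.Injective (algebraMap (MvPolynomial (Fin 2) ℂ) K) :=
  IsFractionRing.injective _ _

lemma xx_ne_zero : xx ≠ 0 := by
  intro h
  have : (X 0 : MvPolynomial (Fin 2) ℂ) = 0 := by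
    apply algebraMap_inj
    simpa [xx] using h
  exact MvPolynomial.X_ne_zero _ this

lemma yy_ne_zero : yy ≠ 0 := by
  intro h
  have : (X 1 : MvPolynomial (Fin 2) ℂ) = 0 := by
    apply algebraMap_inj
    simpa [yy] using h
  exact MvPolynomial.X_ne_zero _ this

lemma zmon_add (μ ν : ℤ × ℤ) : zmon (μ + ν) = zmon μ * zmon ν := by
  simp only [zmon, Prod.fst_add, Prod.snd_add,
    zpow_add₀ xx_ne_zero, zpow_add₀ yy_ne_zero]
  ring

lemma one_add_zmon_ne_zero (ν : ℤ × ℤ) (hν : ν ≠ 0) : (1 : K) + zmon ν ≠ 0 := by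
  intro h0
  set a := ν.1 with ha'
  set b := ν.2 with hb'
  have hz : xx ^ a * yy ^ b = -1 := by
    have := eq_neg_of_add_eq_zero_right h0
    simpa [zmon] using this
  have h1 : (a.toNat : ℤ) = a + ((-a).toNat : ℤ) := by omega
  have h2 : (b.toNat : ℤ) = b + ((-b).toNat : ℤ) := by omega
  have hK : xx ^ (a.toNat : ℤ) * yy ^ (b.toNat : ℤ)
      = -(xx ^ ((-a).toNat : ℤ) * yy ^ ((-b).toNat : ℤ)) := by
    rw [h1, h2, zpow_add₀ xx_ne_zero, zpow_add₀ yy_ne_zero]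
    calc xx ^ a * xx ^ ((-a).toNat : ℤ) * (yy ^ b * yy ^ ((-b).toNat : ℤ))
        = (xx ^ a * yy ^ b) * (xx ^ ((-a).toNat : ℤ) * yy ^ ((-b).toNat : ℤ)) := by ring
      _ = -(xx ^ ((-a).toNat : ℤ) * yy ^ ((-b).toNat : ℤ)) := by rw [hz]; ring
  rw [zpow_natCast, zpow_natCast, zpow_natCast, zpow_natCast] at hK
  -- pull back to the polynomial ring
  have hP : (X 0 : MvPolynomial (Fin 2) ℂ) ^ a.toNat * X 1 ^ b.toNat
      = -(X 0 ^ (-a).toNat * X 1 ^ (-b).toNat) := by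
    apply algebraMap_inj
    simpa [xx, yy, map_mul, map_pow, map_neg] using hK
  have hne : ¬(a.toNat = (-a).toNat ∧ b.toNat = (-b).toNat) := by
    have : a ≠ 0 ∨ b ≠ 0 := by
      by_contra hc
      push_neg at hc
      exact hν (Prod.ext hc.1 hc.2)
    omega
  -- compare coefficients
  have hmono : ∀ p q : ℕ, (X 0 : MvPolynomial (Fin 2) ℂ) ^ p * X 1 ^ q
      = monomial (Finsupp.single 0 p + Finsupp.single 1 q) 1 := by
    intro p q
    rw [X_pow_eq_monomial, X_pow_eq_monomial, monomial_mul, one_mul]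
  rw [hmono, hmono] at hP
  have hd : (Finsupp.single (0 : Fin 2) a.toNat + Finsupp.single 1 b.toNat)
      ≠ (Finsupp.single (0 : Fin 2) (-a).toNat + Finsupp.single 1 (-b).toNat) := by
    intro he
    apply hne
    constructor
    · have := DFunLike.congr_fun he 0
      simpa using this
    · have := DFunLike.congr_fun he 1
      simpa using this
  have := congrArg (coeff (Finsupp.single (0 : Fin 2) a.toNat + Finsupp.single 1 b.toNat)) hP
  rw [coeff_monomial, if_pos rfl] at this
  rw [coeff_neg, coeff_monomial, if_neg (Ne.symm hd)] at this
  simp at this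

lemma pentagon_key (γ γ' : ℤ × ℤ) (h : pairing γ' γ = 1)
    (Kγ Kγ' Kγγ' : K ≃ₐ[ℂ] K)
    (hγ : IsWallCrossing 1 γ Kγ) (hγ' : IsWallCrossing 1 γ' Kγ')
    (hγγ' : IsWallCrossing 1 (γ + γ') Kγγ') (μ : ℤ × ℤ) :
    Kγ (Kγ' (zmon μ)) = Kγ' (Kγγ' (Kγ (zmon μ))) := by
  have hγ'0 : γ' ≠ 0 := by
    intro h0
    rw [h0] at h
    simp [pairing] at h
  have hγγ'0 : γ + γ' ≠ 0 := by
    intro h0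
    have h1 : γ.1 = -γ'.1 := by
      have := congrArg Prod.fst h0
      simp at this; linarith
    have h2 : γ.2 = -γ'.2 := by
      have := congrArg Prod.snd h0
      simp at this; linarith
    simp only [pairing, h1, h2] at h
    nlinarith
  set m := pairing μ γ with hm
  set n := pairing μ γ' with hn
  have hp1 : pairing μ (γ + γ') = m + n := by
    simp only [pairing, hm, hn, Prod.fst_add, Prod.snd_add]; ring
  have hp2 : pairing γ (γ + γ') = -1 := by
    simp only [pairing, Prod.fst_add, Prod.snd_add] at h ⊢
    linear_combination -h
  have hp3 : pairing (γ + γ') γ' = -1 := by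
    simp only [pairing, Prod.fst_add, Prod.snd_add] at h ⊢
    linear_combination -h
  have hp4 : pairing γ γ' = -1 := by
    simp only [pairing] at h ⊢
    linear_combination -h
  have hB : (1 : K) + zmon γ' ≠ 0 := one_add_zmon_ne_zero γ' hγ'0
  have hC : (1 : K) + zmon (γ + γ') ≠ 0 := one_add_zmon_ne_zero _ hγγ'0
  set A : K := 1 + zmon γ with hA'
  set B : K := 1 + zmon γ' with hB'
  set C : K := 1 + zmon (γ + γ') with hC'
  set D : K := 1 + zmon γ' * A with hD'
  have eB : Kγ B = D := by
    rw [hB', map_add, map_one, hγ γ', h, hD']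
    norm_num
    exact Or.inl hA'.symm
  have hD : D ≠ 0 := by
    intro h0
    apply hB
    apply Kγ.injective
    rw [eB, h0, map_zero]
  -- left hand side
  have hLHS : Kγ (Kγ' (zmon μ)) = zmon μ * A ^ m * D ^ n := by
    rw [hγ' μ, one_mul, ← hn, ← hB', map_mul, map_zpow₀, eB, hγ μ, one_mul, ← hm, ← hA']
  -- right hand side, step by step
  have s1 : Kγ (zmon μ) = zmon μ * A ^ m := by
    rw [hγ μ, one_mul, ← hm, ← hA']
  have s2 : Kγγ' (zmon μ * A ^ m) = zmon μ * C ^ (m + n) * (1 + zmon γ * C⁻¹) ^ m := by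
    rw [map_mul, map_zpow₀, hγγ' μ, one_mul, hp1, ← hC', hA', map_add, map_one,
      hγγ' γ, one_mul, hp2, ← hC', zpow_neg_one]
  have s3 : Kγ' C = D * B⁻¹ := by
    rw [hC', map_add, map_one, hγ' (γ + γ'), one_mul, hp3, ← hB', zpow_neg_one,
      zmon_add, hD', hA']
    field_simp
    ring
  have s5 : Kγ' (1 + zmon γ * C⁻¹) = A * B * D⁻¹ := by
    rw [map_add, map_one, map_mul, map_inv₀, s3, hγ' γ, one_mul, hp4, ← hB',
      zpow_neg_one, hA', hD', hB']
    have hB2 : 1 + zmon γ' ≠ 0 := hB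
    have hD2 : 1 + zmon γ' * A ≠ 0 := hD
    field_simp
    rw [hA']
    ring
  have final : zmon μ * B ^ n * (D * B⁻¹) ^ (m + n) * (A * B * D⁻¹) ^ m
      = zmon μ * A ^ m * D ^ n := by
    rw [mul_zpow, mul_zpow, mul_zpow, inv_zpow, inv_zpow, ← zpow_neg, ← zpow_neg]
    have h1 : B ^ n * B ^ (-(m + n)) * B ^ m = 1 := by
      rw [← zpow_add₀ hB, ← zpow_add₀ hB, show n + -(m + n) + m = 0 by ring, zpow_zero]
    have h2 : D ^ (m + n) * D ^ (-m) = D ^ n := by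
      rw [← zpow_add₀ hD, show m + n + -m = n by ring]
    calc zmon μ * B ^ n * (D ^ (m + n) * B ^ (-(m + n))) * (A ^ m * B ^ m * D ^ (-m))
        = zmon μ * A ^ m * (D ^ (m + n) * D ^ (-m)) * (B ^ n * B ^ (-(m + n)) * B ^ m) := by
          ring
      _ = zmon μ * A ^ m * D ^ n := by rw [h1, h2, mul_one]
  rw [hLHS, s1, s2, map_mul, map_mul, map_zpow₀, map_zpow₀, s3, s5, hγ' μ, one_mul,
    ← hn, ← hB']
  exact final.symm

/-- Pentagon identity for elementary wall-crossing transformations: for all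
`γ, γ' ∈ ℤ²` with `⟨γ',γ⟩ = 1`, one has `𝒦_γ ∘ 𝒦_{γ'} = 𝒦_{γ'} ∘ 𝒦_{γ+γ'} ∘ 𝒦_γ`
as automorphisms of `K = ℂ(x,y)` (compositions applied right to left). -/
theorem pentagon_identity (γ γ' : ℤ × ℤ) (h : pairing γ' γ = 1)
    (Kγ Kγ' Kγγ' : K ≃ₐ[ℂ] K)
    (hγ : IsWallCrossing 1 γ Kγ) (hγ' : IsWallCrossing 1 γ' Kγ')
    (hγγ' : IsWallCrossing 1 (γ + γ') Kγγ') :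
    ∀ f : K, Kγ (Kγ' f) = Kγ' (Kγγ' (Kγ f)) := by
  have key : ∀ μ : ℤ × ℤ, Kγ (Kγ' (zmon μ)) = Kγ' (Kγγ' (Kγ (zmon μ))) :=
    pentagon_key γ γ' h Kγ Kγ' Kγγ' hγ hγ' hγγ'
  set F : K →ₐ[ℂ] K := Kγ.toAlgHom.comp Kγ'.toAlgHom with hF
  set G : K →ₐ[ℂ] K := Kγ'.toAlgHom.comp (Kγγ'.toAlgHom.comp Kγ.toAlgHom) with hG
  have hcomp : F.comp (IsScalarTower.toAlgHom ℂ (MvPolynomial (Fin 2) ℂ) K)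
      = G.comp (IsScalarTower.toAlgHom ℂ (MvPolynomial (Fin 2) ℂ) K) := by
    apply MvPolynomial.algHom_ext
    intro i
    fin_cases i
    · have h10 : zmon (1, 0) = algebraMap (MvPolynomial (Fin 2) ℂ) K (X 0) := by
        simp [zmon, xx]
      have := key (1, 0)
      rw [h10] at this
      simpa [hF, hG] using this
    · have h01 : zmon (0, 1) = algebraMap (MvPolynomial (Fin 2) ℂ) K (X 1) := by
        simp [zmon, yy]
      have := key (0, 1)
      rw [h01] at this
      simpa [hF, hG] using this
  have hRing : F.toRingHom = G.toRingHom := by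
    apply IsLocalization.ringHom_ext (nonZeroDivisors (MvPolynomial (Fin 2) ℂ))
    refine RingHom.ext fun p => ?_
    have := AlgHom.congr_fun hcomp p
    simpa using this
  intro f
  have := RingHom.congr_fun hRing f
  simpa [hF, hG] using this

end
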